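/- Let K = Q(√−6) with ring of integers O_K, let p be an odd prime, and suppose x, w1, w2 are nonzero coprime integers with x = 30^(p−1)·w1^p and x^2 + 6 = 6·w2^p. Let γ = u + v√−6 ∈ O_K generate the principal ideal p2·p3·ζ where (x+√−6)O_K = p2·p3·ζ^p, p2 = (2,√−6), p3 = (3,√−6), so that x + √−6 = γ^p / 6^((p−1)/2). Set α = γ/√6 and β = γ̄/√6 in L = Q(i, √6). Then α and β are algebraic integers, (α+β)^2 and αβ are nonzero coprime rational integers, and α/β is not a root of unity. -/

import Mathlib

open Complex in
set_option maxHeartbeats 400000 in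
theorem lehmer_pair_lemma (p : ℕ) (hp : p.Prime) (hodd : Odd p)
    (x w1 w2 : ℤ) (hx : x ≠ 0) (hw1 : w1 ≠ 0) (hw2 : w2 ≠ 0)
    (hcop : Int.gcd w1 w2 = 1)
    (hxe : x = 30^(p-1) * w1^p)
    (heq : x^2 + 6 = 6 * w2^p)
    (u v : ℤ) (γ α β : ℂ)
    (hγ : γ = (u : ℂ) + (v : ℂ) * (Complex.I * Real.sqrt 6))
    (hprin : (x : ℂ) + Complex.I * Real.sqrt 6 = γ^p / (6 : ℂ)^((p-1)/2))
    (hα : α = γ / Real.sqrt 6)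
    (hβ : β = ((u : ℂ) - (v : ℂ) * (Complex.I * Real.sqrt 6)) / Real.sqrt 6) :
    IsIntegral ℤ α ∧ IsIntegral ℤ β ∧
    (∃ m n : ℤ, (α + β)^2 = (m : ℂ) ∧ α * β = (n : ℂ) ∧
      m ≠ 0 ∧ n ≠ 0 ∧ IsCoprime m n) ∧
    ¬ ∃ n : ℕ, 0 < n ∧ (α / β)^n = 1 := by
  -- numerology
  have hp2 : 2 ≤ p := hp.two_le
  have hpne2 : p ≠ 2 := by rintro rfl; exact (by decide : ¬ Odd 2) hodd
  have hp3 : 3 ≤ p := by omega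
  set e := (p - 1) / 2 with he
  have hpe : p = 2 * e + 1 := by obtain ⟨k, hk⟩ := hodd; omega
  have he1 : 1 ≤ e := by omega
  -- complex sqrt 6
  set s : ℂ := ((Real.sqrt 6 : ℝ) : ℂ) with hs
  have hs2 : s ^ 2 = 6 := by
    rw [hs, ← Complex.ofReal_pow, Real.sq_sqrt (by norm_num : (6:ℝ) ≥ 0)]
    norm_num
  have hsne : s ≠ 0 := by
    intro h
    rw [h] at hs2
    norm_num at hs2
  -- the ring hom from ℤ√(-6)
  have hr : (Complex.I * s) * (Complex.I * s) = (((-6 : ℤ) : ℂ)) := by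
    push_cast
    linear_combination Complex.I^2 * hs2 + 6 * Complex.I_sq
  set φ : ℤ√(-6) →+* ℂ := Zsqrtd.lift ⟨Complex.I * s, hr⟩ with hφ
  have hφinj : Function.Injective φ := by
    apply Zsqrtd.lift_injective
    intro n hn
    nlinarith [mul_self_nonneg n]
  have hφuv : φ ⟨u, v⟩ = γ := by
    rw [hφ, Zsqrtd.lift_apply_apply, hγ]
  have hφx1 : φ ⟨x, 1⟩ = (x : ℂ) + Complex.I * s := by
    rw [hφ, Zsqrtd.lift_apply_apply]
    push_cast; ring
  -- key equation in ℤ√(-6)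
  have h6e : ((6:ℂ))^e ≠ 0 := by norm_num
  have hkey : (⟨u, v⟩ : ℤ√(-6)) ^ p = ⟨x, 1⟩ * ((6:ℤ√(-6))) ^ e := by
    apply hφinj
    rw [map_pow, map_mul, map_pow, hφuv, hφx1, map_ofNat]
    rw [hprin]
    field_simp
  have h6pow : ((6:ℤ√(-6))) ^ e = (((6:ℤ)^e : ℤ) : ℤ√(-6)) := by push_cast; ring
  have hre : ((⟨u, v⟩ : ℤ√(-6)) ^ p).re = x * 6 ^ e := by
    rw [hkey, h6pow]
    simp only [Zsqrtd.re_mul, Zsqrtd.re_intCast, Zsqrtd.im_intCast]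
    ring
  have him : ((⟨u, v⟩ : ℤ√(-6)) ^ p).im = 6 ^ e := by
    rw [hkey, h6pow]
    simp only [Zsqrtd.im_mul, Zsqrtd.re_intCast, Zsqrtd.im_intCast]
    ring
  -- norm equation
  have hN : u ^ 2 + 6 * v ^ 2 = 6 * w2 := by
    have h1 : Zsqrtd.norm ((⟨u, v⟩ : ℤ√(-6)) ^ p) =
        Zsqrtd.norm ((⟨x, 1⟩ : ℤ√(-6)) * ((6:ℤ√(-6))) ^ e) := by rw [hkey]
    rw [h6pow, Zsqrtd.norm_mul, Zsqrtd.norm_intCast] at h1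
    have h2 : Zsqrtd.norm ((⟨u, v⟩ : ℤ√(-6)) ^ p) = (Zsqrtd.norm (⟨u, v⟩ : ℤ√(-6))) ^ p :=
      map_pow (Zsqrtd.normMonoidHom : ℤ√(-6) →* ℤ) _ p
    rw [h2] at h1
    have h3 : Zsqrtd.norm (⟨u, v⟩ : ℤ√(-6)) = u ^ 2 + 6 * v ^ 2 := by
      rw [Zsqrtd.norm_def]; ring
    have h4 : Zsqrtd.norm (⟨x, 1⟩ : ℤ√(-6)) = x ^ 2 + 6 := by
      rw [Zsqrtd.norm_def]; ring
    rw [h3, h4, heq] at h1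
    have h5 : (u ^ 2 + 6 * v ^ 2) ^ p = (6 * w2) ^ p := by
      rw [h1, hpe]; ring
    exact hodd.strictMono_pow.injective h5
  -- 6 divides u
  have h2u : (2:ℤ) ∣ u := by
    apply Int.prime_two.dvd_of_dvd_pow (n := 2)
    exact ⟨3 * w2 - 3 * v ^ 2, by linarith⟩
  have h3u : (3:ℤ) ∣ u := by
    apply Int.prime_three.dvd_of_dvd_pow (n := 2)
    exact ⟨2 * w2 - 2 * v ^ 2, by linarith⟩
  obtain ⟨t, hut⟩ : (6:ℤ) ∣ u := by
    obtain ⟨a, ha⟩ := h2u; obtain ⟨b, hb⟩ := h3u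
    exact ⟨a - b, by omega⟩
  have hw2v : w2 = 6 * t ^ 2 + v ^ 2 := by
    rw [hut] at hN; nlinarith [hN]
  -- u ≠ 0
  have hune : u ≠ 0 := by
    intro h0
    have hz0 : (⟨u, v⟩ : ℤ√(-6)) = Zsqrtd.sqrtd * ((v:ℤ) : ℤ√(-6)) := by
      ext <;> simp [h0]
    have hsq : (Zsqrtd.sqrtd : ℤ√(-6)) ^ 2 = (((-6:ℤ)) : ℤ√(-6)) := by
      rw [pow_two, Zsqrtd.dmuld]
    have hz : (⟨u, v⟩ : ℤ√(-6)) ^ p = ((((-6:ℤ))^e * v ^ p : ℤ) : ℤ√(-6)) * Zsqrtd.sqrtd := by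
      rw [hz0, mul_pow, hpe, pow_succ, pow_mul, hsq]
      push_cast; ring
    rw [hz] at hre
    simp only [Zsqrtd.re_mul, Zsqrtd.re_intCast, Zsqrtd.im_intCast,
      Zsqrtd.re_sqrtd, Zsqrtd.im_sqrtd] at hre
    have : x * 6 ^ e = 0 := by linarith [hre]
    have h6ez : (6:ℤ) ^ e ≠ 0 := by positivity
    exact hx (by exact_mod_cast mul_eq_zero.mp this |>.resolve_right h6ez)
  have htne : t ≠ 0 := by rintro rfl; simp at hut; exact hune hut
  -- explicit values of α and β
  have hαval : α = (t : ℂ) * s + (v : ℂ) * Complex.I := by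
    rw [hα, hγ, hut]
    push_cast
    rw [div_eq_iff hsne]
    linear_combination (-(t:ℂ)) * hs2
  have hβval : β = (t : ℂ) * s - (v : ℂ) * Complex.I := by
    rw [hβ, hut]
    push_cast
    rw [div_eq_iff hsne]
    linear_combination (-(t:ℂ)) * hs2
  -- the two integer quantities
  have hw2C : (w2 : ℂ) = 6 * (t:ℂ)^2 + (v:ℂ)^2 := by exact_mod_cast congrArg (Int.cast : ℤ → ℂ) hw2v
  have hmval : (α + β) ^ 2 = ((24 * t ^ 2 : ℤ) : ℂ) := by
    rw [hαval, hβval]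
    push_cast
    linear_combination 4 * (t:ℂ)^2 * hs2
  have hnval : α * β = ((w2 : ℤ) : ℂ) := by
    rw [hαval, hβval, hw2C]
    linear_combination (t:ℂ)^2 * hs2 - (v:ℂ)^2 * Complex.I_sq
  -- w2 is coprime to 6
  have h6x : (6:ℤ) ∣ x := by
    rw [hxe]
    exact Dvd.dvd.mul_right (dvd_pow (by norm_num) (by omega)) _
  obtain ⟨k, hk⟩ := h6x
  have hw2p : w2 ^ p = 6 * k ^ 2 + 1 := by rw [hk] at heq; nlinarith [heq]
  have hw2not2 : ¬ (2:ℤ) ∣ w2 := by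
    intro h
    have h2 : (2:ℤ) ∣ 6 * k ^ 2 + 1 := hw2p ▸ dvd_pow h (by omega)
    have h' := dvd_sub h2 (⟨3 * k ^ 2, by ring⟩ : (2:ℤ) ∣ 6 * k ^ 2)
    rw [show 6 * k ^ 2 + 1 - 6 * k ^ 2 = 1 by ring] at h'
    norm_num at h'
  have hw2not3 : ¬ (3:ℤ) ∣ w2 := by
    intro h
    have h2 : (3:ℤ) ∣ 6 * k ^ 2 + 1 := hw2p ▸ dvd_pow h (by omega)
    have h' := dvd_sub h2 (⟨2 * k ^ 2, by ring⟩ : (3:ℤ) ∣ 6 * k ^ 2)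
    rw [show 6 * k ^ 2 + 1 - 6 * k ^ 2 = 1 by ring] at h'
    norm_num at h'
  -- coprimality
  have hcop24 : IsCoprime (24 * t ^ 2) w2 := by
    rw [Int.isCoprime_iff_gcd_eq_one]
    by_contra hg
    obtain ⟨q, hq, hqd⟩ := Nat.exists_prime_and_dvd hg
    have hqZ : Prime (q : ℤ) := Nat.prime_iff_prime_int.mp hq
    have hq1 : (q:ℤ) ∣ 24 * t ^ 2 := (Int.natCast_dvd_natCast.mpr hqd).trans (Int.gcd_dvd_left _ _)
    have hq2 : (q:ℤ) ∣ w2 := (Int.natCast_dvd_natCast.mpr hqd).trans (Int.gcd_dvd_right _ _)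
    have hqn6 : ¬ (q:ℤ) ∣ 6 := by
      intro h6
      have hq6 : q ∣ 6 := by exact_mod_cast h6
      have hle : q ≤ 6 := Nat.le_of_dvd (by norm_num) hq6
      have hq2le : 2 ≤ q := hq.two_le
      interval_cases q
      · exact hw2not2 (by exact_mod_cast hq2)
      · exact hw2not3 (by exact_mod_cast hq2)
      · revert hq; decide
      · revert hq6; decide
      · revert hq; decide
    have hqt : (q:ℤ) ∣ t := by
      rcases hqZ.dvd_mul.mp hq1 with h | h
      · exfalso
        apply hqn6
        rcases hqZ.dvd_mul.mp (show (q:ℤ) ∣ 6 * 4 by norm_num at h ⊢; exact h) with h' | h'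
        · exact h'
        · have h2 : (q:ℤ) ∣ 2 := hqZ.dvd_of_dvd_pow (n := 2)
            (show (q:ℤ) ∣ 2 ^ 2 by norm_num; exact h')
          exact h2.trans (by norm_num)
      · exact hqZ.dvd_of_dvd_pow h
    have hqv : (q:ℤ) ∣ v := by
      apply hqZ.dvd_of_dvd_pow (n := 2)
      have hv2 : v ^ 2 = w2 - 6 * t ^ 2 := by linarith [hw2v]
      rw [hv2]
      exact dvd_sub hq2 (Dvd.dvd.mul_left (dvd_pow hqt (by norm_num)) 6)
    have hqu : (q:ℤ) ∣ u := hut ▸ Dvd.dvd.mul_left hqt 6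
    obtain ⟨a, ha⟩ := hqu
    obtain ⟨b, hb⟩ := hqv
    have hzq : (⟨u, v⟩ : ℤ√(-6)) = (((q:ℤ)) : ℤ√(-6)) * ⟨a, b⟩ := by
      ext <;> simp [ha, hb, Zsqrtd.re_smul, Zsqrtd.im_smul]
    have himq : (6:ℤ) ^ e = (q:ℤ) ^ p * ((⟨a, b⟩ : ℤ√(-6)) ^ p).im := by
      rw [← him, hzq, mul_pow, show ((((q:ℤ)) : ℤ√(-6))) ^ p = ((((q:ℤ) ^ p) : ℤ) : ℤ√(-6)) by
        push_cast; ring, Zsqrtd.im_smul]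
    have hq6e : (q:ℤ) ∣ 6 ^ e := ⟨(q:ℤ) ^ (p-1) * ((⟨a, b⟩ : ℤ√(-6)) ^ p).im, by
      rw [himq, show (q:ℤ) ^ p = (q:ℤ) * (q:ℤ) ^ (p-1) by
        rw [← pow_succ']; congr 1; omega]
      ring⟩
    exact hqn6 (hqZ.dvd_of_dvd_pow hq6e)
  -- integrality of α and β
  have hsint : IsIntegral ℤ s := ⟨Polynomial.X ^ 2 - Polynomial.C 6,
    Polynomial.monic_X_pow_sub_C 6 (by norm_num), by simp [hs2]⟩
  have hIint : IsIntegral ℤ Complex.I := ⟨Polynomial.X ^ 2 - Polynomial.C (-1),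
    Polynomial.monic_X_pow_sub_C (-1) (by norm_num), by simp [Complex.I_sq]⟩
  have htint : IsIntegral ℤ ((t : ℤ) : ℂ) := ⟨Polynomial.X - Polynomial.C t,
    Polynomial.monic_X_sub_C t, by simp⟩
  have hvint : IsIntegral ℤ ((v : ℤ) : ℂ) := ⟨Polynomial.X - Polynomial.C v,
    Polynomial.monic_X_sub_C v, by simp⟩
  have hαint : IsIntegral ℤ α := by
    rw [hαval]; exact (htint.mul hsint).add (hvint.mul hIint)
  have hβint : IsIntegral ℤ β := by
    rw [hβval]; exact (htint.mul hsint).sub (hvint.mul hIint)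
  have hmne : (24 * t ^ 2 : ℤ) ≠ 0 := mul_ne_zero (by norm_num) (pow_ne_zero 2 htne)
  refine ⟨hαint, hβint, ⟨24 * t ^ 2, w2, hmval, hnval, hmne, hw2, hcop24⟩, ?_⟩
  -- not a root of unity
  rintro ⟨n, hn, hζn⟩
  have hβne : β ≠ 0 := by
    intro h
    rw [h, mul_zero] at hnval
    exact hw2 (by exact_mod_cast hnval.symm)
  have hαne : α ≠ 0 := by
    intro h
    rw [h, zero_mul] at hnval
    exact hw2 (by exact_mod_cast hnval.symm)
  set ζ : ℂ := α / β with hζ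
  have hζne : ζ ≠ 0 := div_ne_zero hαne hβne
  have hζint : IsIntegral ℤ ζ := ⟨Polynomial.X ^ n - Polynomial.C 1,
    Polynomial.monic_X_pow_sub_C 1 (by omega), by simp [hζn]⟩
  have h1 : ζ * ζ ^ (n - 1) = 1 := by
    rw [← pow_succ', show n - 1 + 1 = n by omega]
    exact hζn
  have hζpow : ζ ^ (n - 1) = β / α := by
    have h2 : ζ ^ (n - 1) = ζ⁻¹ := by
      field_simp
      linear_combination h1
    rw [h2, hζ, inv_div]
  have hwC : ((w2 : ℤ) : ℂ) ≠ 0 := Int.cast_ne_zero.mpr hw2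
  have hnval' : α * β = (w2 : ℂ) := hnval
  have hA : α ^ 2 + β ^ 2 = 24 * (t : ℂ) ^ 2 - 2 * (w2 : ℂ) := by
    push_cast at hmval
    linear_combination hmval - 2 * hnval'
  have hcval : ζ + ζ ^ (n - 1) = (24 * (t : ℂ) ^ 2 - 2 * (w2 : ℂ)) / (w2 : ℂ) := by
    rw [hζpow, hζ, div_add_div _ _ hβne hαne, div_eq_div_iff (mul_ne_zero hβne hαne) hwC]
    linear_combination (w2 : ℂ) * hA - (24 * (t : ℂ) ^ 2 - 2 * (w2 : ℂ)) * hnval'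
  set r : ℚ := ((24 * t ^ 2 - 2 * w2 : ℤ) : ℚ) / ((w2 : ℤ) : ℚ) with hrdef
  have hrval : ζ + ζ ^ (n - 1) = (r : ℂ) := by
    rw [hcval, hrdef]
    push_cast
    ring
  have hQint : IsIntegral ℤ r := by
    have hci : IsIntegral ℤ (ζ + ζ ^ (n - 1)) := hζint.add (hζint.pow _)
    rw [hrval] at hci
    have halg : ((r : ℚ) : ℂ) = algebraMap ℚ ℂ r := (eq_ratCast (algebraMap ℚ ℂ) r).symm
    rw [halg] at hci
    exact (isIntegral_algebraMap_iff (algebraMap ℚ ℂ).injective).mp hci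
  obtain ⟨y, hy⟩ := IsIntegrallyClosed.isIntegral_iff.mp hQint
  have hy' : (y : ℚ) = r := by rw [← hy]; simp
  have hwQ : ((w2 : ℤ) : ℚ) ≠ 0 := Int.cast_ne_zero.mpr hw2
  have hyw : y * w2 = 24 * t ^ 2 - 2 * w2 := by
    have h3 : (y : ℚ) * (w2 : ℚ) = ((24 * t ^ 2 - 2 * w2 : ℤ) : ℚ) := by
      rw [hy', hrdef, div_mul_cancel₀ _ hwQ]
    exact_mod_cast h3
  have hdvd : w2 ∣ 24 * t ^ 2 := ⟨y + 2, by linarith⟩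
  have hunit : IsUnit w2 := hcop24.isUnit_of_dvd' hdvd dvd_rfl
  have ht2 : 0 < t ^ 2 := by positivity
  rcases Int.isUnit_iff.mp hunit with h1' | h1' <;> linarith [sq_nonneg v]
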